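/- arXiv:1103.1622 — 3 statements merged into one kernel-verified Lean document; each statement's English description precedes it below -/
import Mathlib

section
/- Over the three-letter alphabet {a,b,c}, let L₁ = {b,c}*a{b,c}* (strings with exactly one a), L₂ = {a,c}*b{a,c}* (strings with exactly one b), and L₃ = {a,b}*c{a,b}* (strings with exactly one c). Then ⋃_{k ≥ 1} (L₁^k ∩ L₂^k ∩ L₃^k) = { x ∈ {a,b,c}* : |x|_a = |x|_b = |x|_c ≥ 1 }, and this language is not context-free. -/
namespace MixAux
open ContextFreeGrammar

universe uT uN
variable {T : Type uT}

/-- map terminal -/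
def tms {N : Type uN} (w : List T) : List (Symbol T N) := w.map Symbol.terminal

@[simp] lemma tms_nil {N : Type uN} : (tms [] : List (Symbol T N)) = [] := rfl
@[simp] lemma tms_append {N : Type uN} (a b : List T) :
    (tms (a ++ b) : List (Symbol T N)) = tms a ++ tms b := List.map_append

lemma nt_not_mem_tms {N : Type uN} (M : N) (w : List T) :
    Symbol.nonterminal M ∉ (tms w : List (Symbol T N)) := by
  simp [tms]

lemma tms_eq_append {N : Type uN} {w : List T} {u v : List (Symbol T N)}
    (h : tms w = u ++ v) : ∃ a b, w = a ++ b ∧ u = tms a ∧ v = tms b := by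
  obtain ⟨a, b, rfl, hu, hv⟩ := List.map_eq_append_iff.mp h
  exact ⟨a, b, rfl, hu.symm, hv.symm⟩

variable {g : ContextFreeGrammar.{uT} T}

/-- derivation in `n` steps -/
inductive DerIn (g : ContextFreeGrammar.{uT} T) :
    List (Symbol T g.NT) → List (Symbol T g.NT) → ℕ → Prop
  | refl (u : List (Symbol T g.NT)) : DerIn g u u 0
  | head {u v w : List (Symbol T g.NT)} {n : ℕ} :
      g.Produces u v → DerIn g v w n → DerIn g u w (n + 1)

lemma DerIn.trans {u v w : List (Symbol T g.NT)} {a b : ℕ}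
    (h1 : DerIn g u v a) (h2 : DerIn g v w b) : DerIn g u w (a + b) := by
  induction h1 with
  | refl => simpa using h2
  | head hp _ ih =>
    have := DerIn.head hp (ih h2)
    convert this using 1
    omega

lemma DerIn.append_right {u v : List (Symbol T g.NT)} {a : ℕ}
    (h : DerIn g u v a) (p : List (Symbol T g.NT)) : DerIn g (u ++ p) (v ++ p) a := by
  induction h with
  | refl => exact DerIn.refl _
  | head hp _ ih =>
    obtain ⟨r, hr, hrw⟩ := hp
    exact DerIn.head ⟨r, hr, hrw.append_right p⟩ ih

lemma DerIn.append_left {u v : List (Symbol T g.NT)} {a : ℕ}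
    (h : DerIn g u v a) (p : List (Symbol T g.NT)) : DerIn g (p ++ u) (p ++ v) a := by
  induction h with
  | refl => exact DerIn.refl _
  | head hp _ ih =>
    obtain ⟨r, hr, hrw⟩ := hp
    exact DerIn.head ⟨r, hr, hrw.append_left p⟩ ih

lemma DerIn.append {u v u' v' : List (Symbol T g.NT)} {a b : ℕ}
    (h : DerIn g u v a) (h' : DerIn g u' v' b) : DerIn g (u ++ u') (v ++ v') (a + b) :=
  (h.append_right u').trans (h'.append_left v)

lemma DerIn.toDerives {u v : List (Symbol T g.NT)} {n : ℕ} (h : DerIn g u v n) :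
    g.Derives u v := by
  induction h with
  | refl => exact Relation.ReflTransGen.refl
  | head hp _ ih => exact (Relation.ReflTransGen.single hp).trans ih

lemma Derives.toDerIn {u v : List (Symbol T g.NT)} (h : g.Derives u v) :
    ∃ n, DerIn g u v n := by
  induction h using Relation.ReflTransGen.head_induction_on with
  | refl => exact ⟨0, DerIn.refl _⟩
  | head hp _ ih => obtain ⟨n, hn⟩ := ih; exact ⟨n + 1, DerIn.head hp hn⟩

lemma ContextFreeRule.rewrites_append_split {r : ContextFreeRule T g.NT}
    {u₁ u₂ v : List (Symbol T g.NT)} (h : r.Rewrites (u₁ ++ u₂) v) :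
    (∃ v₁, r.Rewrites u₁ v₁ ∧ v = v₁ ++ u₂) ∨ (∃ v₂, r.Rewrites u₂ v₂ ∧ v = u₁ ++ v₂) := by
  induction u₁ generalizing v with
  | nil => exact Or.inr ⟨v, by simpa using h, by simp⟩
  | cons x u₁ ih =>
    cases h with
    | head s =>
      exact Or.inl ⟨r.output ++ u₁, ContextFreeRule.Rewrites.head u₁, by simp⟩
    | cons _ hrs =>
      rcases ih hrs with ⟨v₁, hv₁, rfl⟩ | ⟨v₂, hv₂, rfl⟩
      · exact Or.inl ⟨x :: v₁, hv₁.cons x, rfl⟩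
      · exact Or.inr ⟨v₂, hv₂, rfl⟩

lemma DerIn.split {u₁ u₂ w : List (Symbol T g.NT)} {n : ℕ}
    (h : DerIn g (u₁ ++ u₂) w n) :
    ∃ w₁ w₂ n₁ n₂, w = w₁ ++ w₂ ∧ n = n₁ + n₂ ∧ DerIn g u₁ w₁ n₁ ∧ DerIn g u₂ w₂ n₂ := by
  induction n generalizing u₁ u₂ with
  | zero =>
    cases h
    exact ⟨u₁, u₂, 0, 0, rfl, rfl, DerIn.refl _, DerIn.refl _⟩
  | succ n ih =>
    cases h with
    | head hp hd =>
      obtain ⟨r, hr, hrw⟩ := hp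
      rcases ContextFreeRule.rewrites_append_split hrw with ⟨v₁, hv₁, rfl⟩ | ⟨v₂, hv₂, rfl⟩
      · obtain ⟨w₁, w₂, n₁, n₂, rfl, hn, d1, d2⟩ := ih hd
        exact ⟨w₁, w₂, n₁ + 1, n₂, rfl, by omega, DerIn.head ⟨r, hr, hv₁⟩ d1, d2⟩
      · obtain ⟨w₁, w₂, n₁, n₂, rfl, hn, d1, d2⟩ := ih hd
        exact ⟨w₁, w₂, n₁, n₂ + 1, rfl, by omega, d1, DerIn.head ⟨r, hr, hv₂⟩ d2⟩

lemma no_produces_tms {w : List T} {v : List (Symbol T g.NT)} (h : g.Produces (tms w) v) :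
    False := by
  obtain ⟨r, _, hrw⟩ := h
  obtain ⟨p, q, he, -⟩ := hrw.exists_parts
  exact nt_not_mem_tms r.input w (he ▸ (by simp : Symbol.nonterminal r.input ∈ p ++ [Symbol.nonterminal r.input] ++ q))

lemma DerIn.tms_eq {w : List T} {v : List (Symbol T g.NT)} {n : ℕ}
    (h : DerIn g (tms w) v n) : v = tms w ∧ n = 0 := by
  cases h with
  | refl => exact ⟨rfl, rfl⟩
  | head hp _ => exact absurd hp no_produces_tms

lemma DerIn.terminal_eq {t : T} {v : List (Symbol T g.NT)} {n : ℕ}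
    (h : DerIn g [Symbol.terminal t] v n) : v = [Symbol.terminal t] ∧ n = 0 :=
  DerIn.tms_eq (w := [t]) h

lemma DerIn.nil_eq {v : List (Symbol T g.NT)} {n : ℕ}
    (h : DerIn g [] v n) : v = [] ∧ n = 0 :=
  DerIn.tms_eq (w := []) h

lemma DerIn.first_step {N : g.NT} {w : List (Symbol T g.NT)} {n : ℕ}
    (h : DerIn g [Symbol.nonterminal N] w (n + 1)) :
    ∃ r ∈ g.rules, r.input = N ∧ DerIn g r.output w n := by
  cases h with
  | head hp hd =>
    obtain ⟨r, hr, hrw⟩ := hp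
    obtain ⟨p, q, he, rfl⟩ := hrw.exists_parts
    have hp0 : p = [] ∧ r.input = N ∧ q = [] := by
      cases p with
      | nil =>
        simp only [List.nil_append, List.singleton_append, List.cons.injEq,
          Symbol.nonterminal.injEq] at he
        exact ⟨rfl, he.1.symm, he.2.symm⟩
      | cons a p =>
        exfalso
        have := congrArg List.length he
        simp at this
    obtain ⟨rfl, hinp, rfl⟩ := hp0
    exact ⟨r, hr, hinp, by simpa using hd⟩


lemma DerIn.zero_eq {u v : List (Symbol T g.NT)} (h : DerIn g u v 0) : u = v := by
  cases h; rfl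

lemma DerIn.nt_pos {N : g.NT} {w : List T} {n : ℕ}
    (h : DerIn g [Symbol.nonterminal N] (tms w) n) : 1 ≤ n := by
  rcases n with _ | n
  · exact absurd (h.zero_eq ▸ (by simp : Symbol.nonterminal N ∈ [Symbol.nonterminal N]))
      (nt_not_mem_tms N w)
  · omega

lemma find_heavy (s : List (Symbol T g.NT)) :
    ∀ (w : List T) (m t : ℕ), DerIn g s (tms w) m → 1 ≤ t → s.length * t < w.length →
    ∃ (M : g.NT) (A w' B : List T) (c e : ℕ), w = A ++ w' ++ B ∧ t < w'.length ∧
      DerIn g s (tms A ++ [Symbol.nonterminal M] ++ tms B) c ∧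
      DerIn g [Symbol.nonterminal M] (tms w') e ∧ c + e ≤ m := by
  induction s with
  | nil =>
    intro w m t h ht hlen
    exfalso
    obtain ⟨hv, -⟩ := h.nil_eq
    have : w = [] := by simpa [tms] using hv
    subst this
    simp at hlen
  | cons x s ih =>
    intro w m t h ht hlen
    obtain ⟨v₁, v₂, m₁, m₂, hv, hm, d1, d2⟩ := DerIn.split (u₁ := [x]) (u₂ := s) h
    obtain ⟨a, b, rfl, rfl, rfl⟩ := tms_eq_append hv
    by_cases hab : t < a.length
    · cases x with
      | terminal τ =>
        obtain ⟨ha, -⟩ := d1.terminal_eq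
        exfalso
        have : a.length = 1 := by
          have := congrArg List.length ha
          simpa [tms] using this
        omega
      | nonterminal M =>
        refine ⟨M, [], a, b, m₂, m₁, by simp, hab, ?_, d1, by omega⟩
        simpa using d2.append_left [Symbol.nonterminal M]
    · push_neg at hab
      have hblen : s.length * t < b.length := by
        have := hlen
        simp [List.length_append, List.length_cons] at this ⊢
        nlinarith [hab]
      obtain ⟨M, A, w', B, c, e, rfl, hw', dctx, dw', hce⟩ := ih b m₂ t d2 ht hblen
      refine ⟨M, a ++ A, w', B, m₁ + c, e, by simp, hw', ?_, dw', by omega⟩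
      have := d1.append dctx
      simpa [tms] using this


lemma shrink {K : ℕ} (hK : ∀ r ∈ g.rules, r.output.length < K) :
    ∀ (n : ℕ) (N : g.NT) (w : List T) (d : ℕ),
      DerIn g [Symbol.nonterminal N] (tms w) n → K ^ d < w.length →
    ∃ (A w' B : List T) (M : g.NT) (c e : ℕ), w = A ++ w' ++ B ∧
      DerIn g [Symbol.nonterminal N] (tms A ++ [Symbol.nonterminal M] ++ tms B) c ∧
      DerIn g [Symbol.nonterminal M] (tms w') e ∧ c + e ≤ n ∧
      K ^ d < w'.length ∧ w'.length ≤ K ^ (d + 1) := by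
  intro n
  induction n using Nat.strong_induction_on with
  | _ n ih =>
    intro N w d h hd
    by_cases hbig : w.length ≤ K ^ (d + 1)
    · exact ⟨[], w, [], N, 0, n, by simp, by simpa using DerIn.refl [Symbol.nonterminal N],
        h, by omega, hd, hbig⟩
    · push_neg at hbig
      obtain ⟨n', rfl⟩ : ∃ n', n = n' + 1 := ⟨n - 1, by have := h.nt_pos; omega⟩
      obtain ⟨r, hr, rfl, hrd⟩ := h.first_step
      have hKpos : 1 ≤ K := lt_of_le_of_lt (Nat.zero_le _) (hK r hr)
      have hKd1 : 1 ≤ K ^ d := Nat.one_le_pow _ _ hKpos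
      have hlen : r.output.length * K ^ d < w.length := by
        calc r.output.length * K ^ d < (r.output.length + 1) * K ^ d := by nlinarith
          _ ≤ K * K ^ d := Nat.mul_le_mul_right _ (hK r hr)
          _ = K ^ (d + 1) := by ring
          _ < w.length := hbig
      obtain ⟨M, A, w₁, B, c, e, rfl, hw₁, dctx, dw₁, hce⟩ :=
        find_heavy r.output w n' (K ^ d) hrd hKd1 hlen
      obtain ⟨A₂, w', B₂, M₂, c₂, e₂, hw₁eq, dctx₂, dw', hce₂, hlow, hhigh⟩ :=
        ih e (by omega) M w₁ d dw₁ hw₁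
      have step : DerIn g [Symbol.nonterminal r.input] r.output 1 :=
        DerIn.head ⟨r, hr, ContextFreeRule.Rewrites.input_output⟩ (DerIn.refl _)
      have comp1 : DerIn g [Symbol.nonterminal r.input]
          (tms A ++ [Symbol.nonterminal M] ++ tms B) (1 + c) := step.trans dctx
      have comp2 : DerIn g (tms A ++ [Symbol.nonterminal M] ++ tms B)
          (tms (A ++ A₂) ++ [Symbol.nonterminal M₂] ++ tms (B₂ ++ B)) c₂ := by
        have h0 := (dctx₂.append_left (tms A)).append_right (tms B)
        have heq : tms A ++ (tms A₂ ++ [Symbol.nonterminal M₂] ++ tms B₂) ++ tms B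
            = tms (A ++ A₂) ++ [Symbol.nonterminal M₂] ++ tms (B₂ ++ B) := by
          simp [tms_append]
        exact heq ▸ h0
      refine ⟨A ++ A₂, w', B₂ ++ B, M₂, 1 + c + c₂, e₂, by rw [hw₁eq]; simp, comp1.trans comp2,
        dw', by omega, hlow, hhigh⟩


/-- A repeated-nonterminal ("pumpable") decomposition below `M`. -/
def Rpt (g : ContextFreeGrammar.{uT} T) (M : g.NT) (w : List T) (n : ℕ) : Prop :=
  ∃ (P : g.NT) (A V x Y B : List T) (c₁ c₂ c₃ : ℕ),
    w = A ++ V ++ x ++ Y ++ B ∧ 1 ≤ c₂ ∧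
    DerIn g [Symbol.nonterminal M] (tms A ++ [Symbol.nonterminal P] ++ tms B) c₁ ∧
    DerIn g [Symbol.nonterminal P]
      (tms V ++ [Symbol.nonterminal P] ++ tms Y) c₂ ∧
    DerIn g [Symbol.nonterminal P] (tms x) c₃ ∧ c₁ + c₂ + c₃ ≤ n

lemma DerIn.ctx {u v : List (Symbol T g.NT)} {c : ℕ} (h : DerIn g u v c) (A B : List T) :
    DerIn g (tms A ++ u ++ tms B) (tms A ++ v ++ tms B) c :=
  (h.append_left (tms A)).append_right (tms B)

lemma ctx_eq {N : g.NT} (A₀ A B B₀ : List T) :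
    tms A₀ ++ (tms A ++ [Symbol.nonterminal N] ++ tms B) ++ tms B₀
      = (tms (A₀ ++ A) : List (Symbol T g.NT)) ++ [Symbol.nonterminal N] ++ tms (B ++ B₀) := by
  simp [tms_append]

lemma Rpt.mono {M : g.NT} {w : List T} {n m : ℕ} (h : Rpt g M w n) (hnm : n ≤ m) :
    Rpt g M w m := by
  obtain ⟨P, A, V, x, Y, B, c₁, c₂, c₃, h1, h2, h3, h4, h5, h6⟩ := h
  exact ⟨P, A, V, x, Y, B, c₁, c₂, c₃, h1, h2, h3, h4, h5, by omega⟩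

lemma Rpt.lift {N M : g.NT} {A₀ B₀ w : List T} {c₀ n : ℕ}
    (h0 : DerIn g [Symbol.nonterminal N] (tms A₀ ++ [Symbol.nonterminal M] ++ tms B₀) c₀)
    (hR : Rpt g M w n) : Rpt g N (A₀ ++ w ++ B₀) (c₀ + n) := by
  obtain ⟨P, A, V, x, Y, B, c₁, c₂, c₃, h1, h2, h3, h4, h5, h6⟩ := hR
  refine ⟨P, A₀ ++ A, V, x, Y, B ++ B₀, c₀ + c₁, c₂, c₃, by rw [h1]; simp, h2,
    h0.trans (ctx_eq A₀ A B B₀ ▸ h3.ctx A₀ B₀), h4, h5, by omega⟩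

lemma DerIn.mem_inputs [DecidableEq g.NT] {M : g.NT} {w : List T} {n : ℕ}
    (h : DerIn g [Symbol.nonterminal M] (tms w) n) :
    M ∈ g.rules.image ContextFreeRule.input := by
  obtain ⟨n', rfl⟩ : ∃ n', n = n' + 1 := ⟨n - 1, by have := h.nt_pos; omega⟩
  obtain ⟨r, hr, rfl, -⟩ := h.first_step
  exact Finset.mem_image_of_mem _ hr

lemma repAux [DecidableEq g.NT] {K : ℕ} (hK : ∀ r ∈ g.rules, r.output.length < K)
    (s : Finset g.NT) :
    ∀ (n : ℕ) (M : g.NT) (w : List T), M ∈ s →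
      DerIn g [Symbol.nonterminal M] (tms w) n → K ^ s.card < w.length →
      Rpt g M w n ∨ ∃ (P : g.NT) (A x B : List T) (c₁ c₃ : ℕ), P ∉ s ∧
        w = A ++ x ++ B ∧ 1 ≤ c₁ ∧
        DerIn g [Symbol.nonterminal M] (tms A ++ [Symbol.nonterminal P] ++ tms B) c₁ ∧
        DerIn g [Symbol.nonterminal P] (tms x) c₃ ∧ c₁ + c₃ ≤ n := by
  induction s using Finset.strongInduction with
  | _ s ih =>
    intro n M w hM h hlen
    obtain ⟨n', rfl⟩ : ∃ n', n = n' + 1 := ⟨n - 1, by have := h.nt_pos; omega⟩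
    obtain ⟨r, hr, rfl, hrd⟩ := h.first_step
    have hKpos : 1 ≤ K := lt_of_le_of_lt (Nat.zero_le _) (hK r hr)
    have hcard1 : 1 ≤ s.card := Finset.card_pos.mpr ⟨r.input, hM⟩
    have hKd1 : 1 ≤ K ^ (s.card - 1) := Nat.one_le_pow _ _ hKpos
    have hlen' : r.output.length * K ^ (s.card - 1) < w.length := by
      calc r.output.length * K ^ (s.card - 1)
          < (r.output.length + 1) * K ^ (s.card - 1) := by nlinarith
        _ ≤ K * K ^ (s.card - 1) := Nat.mul_le_mul_right _ (hK r hr)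
        _ = K ^ (s.card - 1 + 1) := by ring
        _ = K ^ s.card := by congr 1; omega
        _ < w.length := hlen
    obtain ⟨M₁, A₁, w₁, B₁, c, e, rfl, hw₁, dctx, dw₁, hce⟩ :=
      find_heavy r.output w n' (K ^ (s.card - 1)) hrd hKd1 hlen'
    have step : DerIn g [Symbol.nonterminal r.input] r.output 1 :=
      DerIn.head ⟨r, hr, ContextFreeRule.Rewrites.input_output⟩ (DerIn.refl _)
    have comp1 : DerIn g [Symbol.nonterminal r.input]
        (tms A₁ ++ [Symbol.nonterminal M₁] ++ tms B₁) (1 + c) := step.trans dctx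
    by_cases hM₁ : M₁ ∈ s.erase r.input
    · have hssub : s.erase r.input ⊂ s := Finset.erase_ssubset hM
      have hcard : (s.erase r.input).card = s.card - 1 := Finset.card_erase_of_mem hM
      rcases ih _ hssub e M₁ w₁ hM₁ dw₁ (by rw [hcard]; exact hw₁) with hR | hOut
      · exact Or.inl ((Rpt.lift comp1 hR).mono (by omega))
      · obtain ⟨P, A', x, B', c₁, c₃, hPs, hw₁eq, hc₁, dP, dx, hsum⟩ := hOut
        by_cases hPM : P = r.input
        · subst hPM
          refine Or.inl ⟨r.input, [], A₁ ++ A', x, B' ++ B₁, [], 0, 1 + c + c₁, c₃,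
            by rw [hw₁eq]; simp, by omega, by simpa using DerIn.refl _,
            comp1.trans (ctx_eq A₁ A' B' B₁ ▸ dP.ctx A₁ B₁), dx, by omega⟩
        · refine Or.inr ⟨P, A₁ ++ A', x, B' ++ B₁, 1 + c + c₁, c₃,
            fun hPs' => hPs (Finset.mem_erase.mpr ⟨hPM, hPs'⟩),
            by rw [hw₁eq]; simp, by omega,
            comp1.trans (ctx_eq A₁ A' B' B₁ ▸ dP.ctx A₁ B₁), dx, by omega⟩
    · by_cases hM₁M : M₁ = r.input
      · subst hM₁M
        exact Or.inl ⟨r.input, [], A₁, w₁, B₁, [], 0, 1 + c, e, by simp, by omega,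
          by simpa using DerIn.refl _, comp1, dw₁, by omega⟩
      · exact Or.inr ⟨M₁, A₁, w₁, B₁, 1 + c, e,
          fun hM₁s => hM₁ (Finset.mem_erase.mpr ⟨hM₁M, hM₁s⟩),
          rfl, by omega, comp1, dw₁, by omega⟩


/-- `i`-fold repetition of a word. -/
def rep (i : ℕ) (v : List T) : List T := (List.replicate i v).flatten

@[simp] lemma rep_zero (v : List T) : rep 0 v = [] := rfl
lemma rep_succ (i : ℕ) (v : List T) : rep (i + 1) v = v ++ rep i v := by
  simp [rep, List.replicate_succ]
lemma rep_succ' (i : ℕ) (v : List T) : rep (i + 1) v = rep i v ++ v := by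
  simp [rep, List.replicate_succ']

lemma pump_iter {P : g.NT} {V Y : List T} {c : ℕ}
    (h : DerIn g [Symbol.nonterminal P]
      (tms V ++ [Symbol.nonterminal P] ++ tms Y) c) (i : ℕ) :
    ∃ m, DerIn g [Symbol.nonterminal P]
      (tms (rep i V) ++ [Symbol.nonterminal P] ++ tms (rep i Y)) m := by
  induction i with
  | zero => exact ⟨0, by simpa using DerIn.refl _⟩
  | succ i ih =>
    obtain ⟨m, hm⟩ := ih
    refine ⟨c + m, h.trans ?_⟩
    have h0 := hm.ctx V Y
    rw [ctx_eq] at h0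
    rw [rep_succ i V, rep_succ' i Y]
    exact h0

lemma pumping [DecidableEq g.NT] {K : ℕ} (hK : ∀ r ∈ g.rules, r.output.length < K)
    (hKpos : 1 ≤ K) :
    ∀ (n : ℕ) (N : g.NT) (w : List T), DerIn g [Symbol.nonterminal N] (tms w) n →
      K ^ ((g.rules.image ContextFreeRule.input).card + 1) < w.length →
      ∃ u v x y z : List T, w = u ++ v ++ x ++ y ++ z ∧ 1 ≤ v.length + y.length ∧
        v.length + x.length + y.length ≤ K ^ ((g.rules.image ContextFreeRule.input).card + 1) ∧
        ∀ i, ∃ m, DerIn g [Symbol.nonterminal N]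
          (tms (u ++ rep i v ++ x ++ rep i y ++ z)) m := by
  intro n
  induction n using Nat.strong_induction_on with
  | _ n ih =>
    intro N w h hlen
    set R := (g.rules.image ContextFreeRule.input).card with hR
    have hR0 : K ^ R < w.length :=
      lt_of_le_of_lt (Nat.pow_le_pow_right hKpos (by omega)) hlen
    obtain ⟨A, w', B, M, c, e, rfl, dctx, dw', hce, hlow, hhigh⟩ := shrink hK n N w R h hR0
    have hMin : M ∈ g.rules.image ContextFreeRule.input := dw'.mem_inputs
    rcases repAux hK (g.rules.image ContextFreeRule.input) e M w' hMin dw' hlow with hRpt | hOut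
    · obtain ⟨P, A', V, x, Y, B', c₁, c₂, c₃, hw', hc₂, d₁, d₂, d₃, hsum⟩ := hRpt
      by_cases hVY : V = [] ∧ Y = []
      · obtain ⟨rfl, rfl⟩ := hVY
        -- splice out the repeat, getting a strictly shorter derivation of the same word
        have s1 : DerIn g [Symbol.nonterminal N]
            (tms (A ++ A') ++ [Symbol.nonterminal P] ++ tms (B' ++ B)) (c + c₁) :=
          dctx.trans (ctx_eq A A' B' B ▸ d₁.ctx A B)
        have s2 := d₃.ctx (A ++ A') (B' ++ B)
        have hweq : tms (A ++ A') ++ tms x ++ tms (B' ++ B)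
            = (tms (A ++ (A' ++ [] ++ x ++ [] ++ B') ++ B) : List (Symbol T g.NT)) := by
          simp [tms_append]
        have s3 : DerIn g [Symbol.nonterminal N]
            (tms (A ++ (A' ++ [] ++ x ++ [] ++ B') ++ B)) (c + c₁ + c₃) :=
          s1.trans (hweq ▸ s2)
        rw [← hw'] at s3
        exact ih (c + c₁ + c₃) (by omega) N (A ++ w' ++ B) s3 hlen
      · refine ⟨A ++ A', V, x, Y, B' ++ B, by rw [hw']; simp, ?_, ?_, ?_⟩
        · have : V ≠ [] ∨ Y ≠ [] := by tauto
          rcases this with hne | hne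
          · have := List.length_pos_iff.mpr hne; omega
          · have := List.length_pos_iff.mpr hne; omega
        · have := congrArg List.length hw'
          simp [List.length_append] at this
          omega
        · intro i
          obtain ⟨m, pd⟩ := pump_iter d₂ i
          have s1 : DerIn g [Symbol.nonterminal N]
              (tms (A ++ A') ++ [Symbol.nonterminal P] ++ tms (B' ++ B)) (c + c₁) :=
            dctx.trans (ctx_eq A A' B' B ▸ d₁.ctx A B)
          have s2 : DerIn g [Symbol.nonterminal N]
              (tms ((A ++ A') ++ rep i V) ++ [Symbol.nonterminal P]
                ++ tms (rep i Y ++ (B' ++ B))) (c + c₁ + m) :=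
            s1.trans (ctx_eq (A ++ A') (rep i V) (rep i Y) (B' ++ B) ▸ pd.ctx (A ++ A') (B' ++ B))
          have s3 := d₃.ctx ((A ++ A') ++ rep i V) (rep i Y ++ (B' ++ B))
          have hfin : tms ((A ++ A') ++ rep i V) ++ tms x ++ tms (rep i Y ++ (B' ++ B))
              = (tms ((A ++ A') ++ rep i V ++ x ++ rep i Y ++ (B' ++ B)) : List (Symbol T g.NT)) := by
            simp [tms_append]
          exact ⟨c + c₁ + m + c₃, s2.trans (hfin ▸ s3)⟩
    · obtain ⟨P, A', x, B', c₁, c₃, hPs, -, -, -, dx, -⟩ := hOut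
      exact absurd dx.mem_inputs hPs


theorem language_pumping (g : ContextFreeGrammar.{uT} T) :
    ∃ p : ℕ, 1 ≤ p ∧ ∀ w ∈ g.language, p < w.length →
      ∃ u v x y z : List T, w = u ++ v ++ x ++ y ++ z ∧ 1 ≤ v.length + y.length ∧
        v.length + x.length + y.length ≤ p ∧
        ∀ i, u ++ rep i v ++ x ++ rep i y ++ z ∈ g.language := by
  classical
  set K : ℕ := (g.rules.sup fun r => r.output.length) + 1 with hKdef
  have hK : ∀ r ∈ g.rules, r.output.length < K := fun r hr => by
    have h : r.output.length ≤ (g.rules.sup fun r => r.output.length) := by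
      simpa using Finset.le_sup (f := fun r => r.output.length) hr
    omega
  have hKpos : 1 ≤ K := by omega
  refine ⟨K ^ ((g.rules.image ContextFreeRule.input).card + 1),
    Nat.one_le_pow _ _ hKpos, fun w hw hlen => ?_⟩
  rw [ContextFreeGrammar.mem_language_iff] at hw
  obtain ⟨n, hn⟩ := Derives.toDerIn hw
  obtain ⟨u, v, x, y, z, hw, hvy, hvxy, hpump⟩ := pumping hK hKpos n g.initial w hn hlen
  refine ⟨u, v, x, y, z, hw, hvy, hvxy, fun i => ?_⟩
  obtain ⟨m, hm⟩ := hpump i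
  rw [ContextFreeGrammar.mem_language_iff]
  exact hm.toDerives

end MixAux

namespace MixAux

/-- the language of strings containing exactly one `σ` -/
def oneCount (σ : Fin 3) : Language (Fin 3) := {y | y.count σ = 1}

lemma count_eq_of_mem_pow (σ : Fin 3) :
    ∀ (k : ℕ) (x : List (Fin 3)), x ∈ oneCount σ ^ k →
      x.count σ = k := by
  intro k
  induction k with
  | zero =>
    intro x hx
    rw [pow_zero] at hx
    rw [(Language.mem_one x).mp hx]
    rfl
  | succ k ih =>
    intro x hx
    rw [pow_succ, Language.mem_mul] at hx
    obtain ⟨a, ha, b, hb, rfl⟩ := hx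
    rw [List.count_append, ih a ha, hb]

lemma exists_first_split (σ : Fin 3) (x : List (Fin 3)) (hx : σ ∈ x) :
    ∃ s t, x = s ++ σ :: t ∧ s.count σ = 0 := by
  induction x with
  | nil => cases hx
  | cons c x ih =>
    by_cases hc : c = σ
    · exact ⟨[], x, by simp [hc], rfl⟩
    · obtain ⟨s, t, rfl, hs⟩ := ih ((List.mem_cons.mp hx).resolve_left fun h => hc h.symm)
      exact ⟨c :: s, t, rfl, by simp [List.count_cons, hs, hc]⟩

lemma mem_pow_of_count (σ : Fin 3) :
    ∀ (k : ℕ), 1 ≤ k → ∀ (x : List (Fin 3)), x.count σ = k →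
      x ∈ oneCount σ ^ k := by
  intro k
  induction k with
  | zero => omega
  | succ k ih =>
    intro _ x hx
    rcases Nat.eq_zero_or_pos k with rfl | hk
    · rw [pow_one]
      exact hx
    · have hmem : σ ∈ x := by
        rw [← List.count_pos_iff]
        omega
      obtain ⟨s, t, rfl, hs⟩ := exists_first_split σ _ hmem
      have hts : t.count σ = k := by
        rw [List.count_append, List.count_cons, hs] at hx
        simp at hx
        omega
      rw [pow_succ', Language.mem_mul]
      exact ⟨s ++ [σ], by show List.count σ (s ++ [σ]) = 1; simp [List.count_append, hs], t,
        ih hk t hts, by simp⟩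

lemma length_eq_three_counts (l : List (Fin 3)) :
    l.length = l.count 0 + l.count 1 + l.count 2 := by
  induction l with
  | nil => rfl
  | cons a l ih =>
    fin_cases a <;> simp [List.count_cons, ih] <;> omega

end MixAux

/-- With `L₁, L₂, L₃` the languages over `{a,b,c}` (here `a = 0`, `b = 1`,
`c = 2`) of strings with exactly one `a`, exactly one `b`, and exactly one `c`
respectively, `⋃_{k ≥ 1} (L₁^k ∩ L₂^k ∩ L₃^k)` equals the set of strings with
equal positive numbers of `a`'s, `b`'s and `c`'s, and is not context-free. -/
theorem matched_powers_not_contextFree :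
    let L₁ : Language (Fin 3) := {x | x.count 0 = 1}
    let L₂ : Language (Fin 3) := {x | x.count 1 = 1}
    let L₃ : Language (Fin 3) := {x | x.count 2 = 1}
    let L : Language (Fin 3) :=
      {x | x.count 0 = x.count 1 ∧ x.count 1 = x.count 2 ∧ 1 ≤ x.count 0}
    {x | ∃ k : ℕ, 1 ≤ k ∧ x ∈ L₁ ^ k ∧ x ∈ L₂ ^ k ∧ x ∈ L₃ ^ k} = L ∧
      ¬ L.IsContextFree := by
  intro L₁ L₂ L₃ L
  constructor
  · ext x
    simp only [Set.mem_setOf_eq]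
    constructor
    · rintro ⟨k, hk, h1, h2, h3⟩
      have c1 := MixAux.count_eq_of_mem_pow 0 k x h1
      have c2 := MixAux.count_eq_of_mem_pow 1 k x h2
      have c3 := MixAux.count_eq_of_mem_pow 2 k x h3
      exact ⟨by omega, by omega, by omega⟩
    · rintro ⟨e1, e2, e3⟩
      exact ⟨x.count 0, e3, MixAux.mem_pow_of_count 0 _ e3 x rfl,
        MixAux.mem_pow_of_count 1 _ (by omega) x (by omega),
        MixAux.mem_pow_of_count 2 _ (by omega) x (by omega)⟩
  · rintro ⟨g, hg⟩
    obtain ⟨p, hp1, hpump⟩ := MixAux.language_pumping g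
    set N := p + 1 with hN
    set w : List (Fin 3) :=
      List.replicate N 0 ++ List.replicate N 1 ++ List.replicate N 2 with hw
    have hwc0 : w.count 0 = N := by simp [hw, List.count_replicate]
    have hwc1 : w.count 1 = N := by simp [hw, List.count_replicate]
    have hwc2 : w.count 2 = N := by simp [hw, List.count_replicate]
    have hwlen : w.length = 3 * N := by simp [hw]; omega
    have hwL : w ∈ g.language := by
      rw [hg]
      exact ⟨by omega, by omega, by omega⟩
    obtain ⟨u, v, x, y, z, hdec, hvy, hvxy, hpw⟩ := hpump w hwL (by omega)
    have hsum : u.length + v.length + x.length + y.length + z.length = 3 * N := by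
      have := congrArg List.length hdec
      simp [List.length_append] at this
      omega
    -- if `u` is long, `v` and `y` contain no `0`
    have hu0 : N ≤ u.length → v.count 0 + y.count 0 = 0 := by
      intro hu
      have hrest : v ++ (x ++ (y ++ z)) = w.drop u.length := by
        rw [hdec, show u ++ v ++ x ++ y ++ z = u ++ (v ++ (x ++ (y ++ z))) by
          simp [List.append_assoc]]
        rw [List.drop_left]
      have hdropN : w.drop N = List.replicate N 1 ++ List.replicate N 2 := by
        rw [show w = List.replicate N (0 : Fin 3) ++
          (List.replicate N 1 ++ List.replicate N 2) by simp [hw, List.append_assoc]]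
        rw [List.drop_left' (by simp)]
      have hsub : w.drop u.length = (w.drop N).drop (u.length - N) := by
        rw [List.drop_drop]
        congr 1
        omega
      have hcle : (v ++ (x ++ (y ++ z))).count 0 ≤ (w.drop N).count 0 := by
        rw [hrest, hsub]
        exact (List.drop_sublist _ _).count_le 0
      rw [hdropN] at hcle
      simp [List.count_append, List.count_replicate] at hcle
      omega
    -- if `z` is long, `v` and `y` contain no `2`
    have hz2 : N ≤ z.length → v.count 2 + y.count 2 = 0 := by
      intro hz
      have hfront : u ++ v ++ x ++ y = w.take (u ++ v ++ x ++ y).length := by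
        rw [hdec, show u ++ v ++ x ++ y ++ z = (u ++ v ++ x ++ y) ++ z from rfl]
        rw [List.take_left]
      have htakeN : w.take (2 * N) = List.replicate N 0 ++ List.replicate N 1 := by
        rw [show w = (List.replicate N (0 : Fin 3) ++ List.replicate N 1) ++
          List.replicate N 2 from rfl]
        rw [List.take_left' (by simp; omega)]
      have hklen : (u ++ v ++ x ++ y).length ≤ 2 * N := by
        simp [List.length_append]
        omega
      have hsub : w.take (u ++ v ++ x ++ y).length
          = (w.take (2 * N)).take (u ++ v ++ x ++ y).length := by
        rw [List.take_take]
        congr 1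
        omega
      have hcle : (u ++ v ++ x ++ y).count 2 ≤ (w.take (2 * N)).count 2 := by
        rw [hfront, hsub]
        exact (List.take_sublist _ _).count_le 2
      rw [htakeN] at hcle
      simp [List.count_append, List.count_replicate] at hcle
      omega
    -- at least one of the two applies
    have hone : v.count 0 + y.count 0 = 0 ∨ v.count 2 + y.count 2 = 0 := by
      by_cases hu : N ≤ u.length
      · exact Or.inl (hu0 hu)
      · by_cases hz : N ≤ z.length
        · exact Or.inr (hz2 hz)
        · exfalso
          omega
    -- counts of the pumped word (i = 2)
    have hp2 := hpw 2
    rw [hg] at hp2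
    obtain ⟨e01, e12, -⟩ := hp2
    have hrep2 : ∀ l : List (Fin 3), MixAux.rep 2 l = l ++ l := by
      intro l
      simp [MixAux.rep]
    have hcnt : ∀ σ : Fin 3,
        (u ++ MixAux.rep 2 v ++ x ++ MixAux.rep 2 y ++ z).count σ
          = w.count σ + v.count σ + y.count σ := by
      intro σ
      rw [hdec, hrep2, hrep2]
      simp [List.count_append]
      omega
    rw [hcnt 0, hcnt 1] at e01
    rw [hcnt 1, hcnt 2] at e12
    have hlvy := MixAux.length_eq_three_counts (v ++ y)
    simp [List.count_append, List.length_append] at hlvy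
    omega
end

section
/- Let A = {a^{m₁}, …, a^{m_r}} and B = {a^{n₁}, …, a^{n_s}} be finite nonempty languages of nonempty words over the one-letter alphabet {a} (so all mᵢ, nⱼ ≥ 1). Then there exists k ≥ 1 with A^k ∩ B^k ≠ ∅ if and only if min_i mᵢ ≤ max_j nⱼ and min_j nⱼ ≤ max_i mᵢ. Moreover, if both conditions hold, then A^k ∩ B^k ≠ ∅ for some k with 1 ≤ k ≤ max(m₁, …, m_r, n₁, …, n_s). -/
lemma mem_pow_unary (S : Finset ℕ) (A : Language (Fin 1)) (hA : A = {x | x.length ∈ S}) :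
    ∀ (k : ℕ) (x : List (Fin 1)), x ∈ A ^ k ↔
      ∃ l : List ℕ, l.length = k ∧ (∀ i ∈ l, i ∈ S) ∧ l.sum = x.length := by
  intro k
  induction k with
  | zero =>
    intro x
    simp only [pow_zero, Language.mem_one]
    constructor
    · rintro rfl; exact ⟨[], rfl, by simp, by simp⟩
    · rintro ⟨l, hl, _, hsum⟩
      rw [List.length_eq_zero_iff] at hl
      subst hl
      simpa using (List.length_eq_zero_iff.mp hsum.symm)
  | succ n ih =>
    intro x
    rw [pow_succ', Language.mem_mul]
    constructor
    · rintro ⟨a, ha, b, hb, rfl⟩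
      obtain ⟨l, hl, hmem, hsum⟩ := (ih b).mp hb
      refine ⟨a.length :: l, by simp [hl], ?_, by simp [hsum]⟩
      intro i hi
      rw [List.mem_cons] at hi
      rcases hi with rfl | hi
      · rw [hA] at ha; exact ha
      · exact hmem _ hi
    · rintro ⟨l, hl, hmem, hsum⟩
      rcases l with _ | ⟨i, l'⟩
      · simp at hl
      · have hil : i ≤ x.length := by
          rw [← hsum, List.sum_cons]; omega
        refine ⟨x.take i, ?_, x.drop i, ?_, by simp⟩
        · rw [hA]
          show (x.take i).length ∈ S
          rw [List.length_take, min_eq_left hil]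
          exact hmem i (by simp)
        · apply (ih _).mpr
          refine ⟨l', by simpa using hl, fun j hj => hmem j (by simp [hj]), ?_⟩
          simp only [List.length_drop]
          simp only [List.sum_cons] at hsum
          omega

lemma bound_unary (S : Finset ℕ) (hS : S.Nonempty) (A : Language (Fin 1))
    (hA : A = {x | x.length ∈ S}) (k : ℕ) (x : List (Fin 1)) (hx : x ∈ A ^ k) :
    k * S.min' hS ≤ x.length ∧ x.length ≤ k * S.max' hS := by
  obtain ⟨l, hl, hmem, hsum⟩ := (mem_pow_unary S A hA k x).mp hx
  constructor
  · calc k * S.min' hS = l.length • S.min' hS := by rw [hl, smul_eq_mul]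
    _ ≤ l.sum := List.card_nsmul_le_sum _ _ (fun i hi => S.min'_le i (hmem i hi))
    _ = x.length := hsum
  · calc x.length = l.sum := hsum.symm
    _ ≤ l.length • S.max' hS := List.sum_le_card_nsmul _ _ (fun i hi => S.le_max' i (hmem i hi))
    _ = k * S.max' hS := by rw [hl, smul_eq_mul]

lemma half_unary (S T : Finset ℕ) (hS : S.Nonempty) (hT : T.Nonempty)
    (hS1 : ∀ i ∈ S, 1 ≤ i)
    (A B : Language (Fin 1))
    (hA : A = {x | x.length ∈ S}) (hB : B = {x | x.length ∈ T})
    (hcase : S.min' hS ≤ T.min' hT) (h2 : T.min' hT ≤ S.max' hS) :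
    ∃ k : ℕ, 1 ≤ k ∧ k ≤ S.max' hS ∧ ∃ x, x ∈ A ^ k ∧ x ∈ B ^ k := by
  set m := S.min' hS with hm
  set M := S.max' hS with hM
  set n := T.min' hT with hn
  have hmS : m ∈ S := S.min'_mem hS
  have hMS : M ∈ S := S.max'_mem hS
  have hnT : n ∈ T := T.min'_mem hT
  have hm1 : 1 ≤ m := hS1 m hmS
  rcases eq_or_lt_of_le hcase with heq | hlt
  · refine ⟨1, le_refl 1, hm1.trans (S.min'_le _ (S.max'_mem hS)), List.replicate n 0, ?_, ?_⟩
    · exact (mem_pow_unary S A hA 1 _).mpr ⟨[m], rfl, by simpa using hmS,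
        by simp [heq]⟩
    · exact (mem_pow_unary T B hB 1 _).mpr ⟨[n], rfl, by simpa using hnT, by simp⟩
  · refine ⟨M - m, by omega, by omega, List.replicate ((M - m) * n) 0, ?_, ?_⟩
    · refine (mem_pow_unary S A hA _ _).mpr
        ⟨List.replicate (M - n) m ++ List.replicate (n - m) M, by simp; omega, ?_, ?_⟩
      · intro i hi
        simp only [List.mem_append, List.mem_replicate] at hi
        rcases hi with ⟨_, rfl⟩ | ⟨_, rfl⟩
        · exact hmS
        · exact hMS
      · simp only [List.sum_append, List.sum_replicate, smul_eq_mul, List.length_replicate]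
        have h1 : m ≤ n := le_of_lt hlt
        zify [h1, h2, h1.trans h2]
        ring
    · refine (mem_pow_unary T B hB _ _).mpr ⟨List.replicate (M - m) n, by simp, ?_, ?_⟩
      · intro i hi
        rw [List.mem_replicate] at hi
        rw [hi.2]; exact hnT
      · simp [mul_comm]

/-- For finite nonempty unary languages `A`, `B` of nonempty words, encoded by
their nonempty exponent sets `S`, `T` of positive naturals: `A^k ∩ B^k ≠ ∅`
for some `k ≥ 1` iff `min S ≤ max T` and `min T ≤ max S`; and in that case
such a `k` exists with `1 ≤ k ≤ max(max S, max T)`. -/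
theorem unary_matched_powers (S T : Finset ℕ) (hS : S.Nonempty) (hT : T.Nonempty)
    (hS1 : ∀ i ∈ S, 1 ≤ i) (hT1 : ∀ j ∈ T, 1 ≤ j)
    (A B : Language (Fin 1))
    (hA : A = {x | x.length ∈ S}) (hB : B = {x | x.length ∈ T}) :
    ((∃ k : ℕ, 1 ≤ k ∧ ∃ x, x ∈ A ^ k ∧ x ∈ B ^ k) ↔
      (S.min' hS ≤ T.max' hT ∧ T.min' hT ≤ S.max' hS)) ∧
    (S.min' hS ≤ T.max' hT → T.min' hT ≤ S.max' hS →
      ∃ k : ℕ, 1 ≤ k ∧ k ≤ max (S.max' hS) (T.max' hT) ∧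
        ∃ x, x ∈ A ^ k ∧ x ∈ B ^ k) := by
  have key : S.min' hS ≤ T.max' hT → T.min' hT ≤ S.max' hS →
      ∃ k : ℕ, 1 ≤ k ∧ k ≤ max (S.max' hS) (T.max' hT) ∧
        ∃ x, x ∈ A ^ k ∧ x ∈ B ^ k := by
    intro h1 h2
    rcases le_total (S.min' hS) (T.min' hT) with hc | hc
    · obtain ⟨k, hk1, hk2, x, hxA, hxB⟩ :=
        half_unary S T hS hT hS1 A B hA hB hc h2
      exact ⟨k, hk1, hk2.trans (le_max_left _ _), x, hxA, hxB⟩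
    · obtain ⟨k, hk1, hk2, x, hxB, hxA⟩ :=
        half_unary T S hT hS hT1 B A hB hA hc h1
      exact ⟨k, hk1, hk2.trans (le_max_right _ _), x, hxA, hxB⟩
  constructor
  · constructor
    · rintro ⟨k, hk, x, hxA, hxB⟩
      obtain ⟨hA1, hA2⟩ := bound_unary S hS A hA k x hxA
      obtain ⟨hB1, hB2⟩ := bound_unary T hT B hB k x hxB
      constructor
      · have : k * S.min' hS ≤ k * T.max' hT := hA1.trans hB2
        exact Nat.le_of_mul_le_mul_left this (by omega)
      · have : k * T.min' hT ≤ k * S.max' hS := hB1.trans hA2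
        exact Nat.le_of_mul_le_mul_left this (by omega)
    · rintro ⟨h1, h2⟩
      obtain ⟨k, hk1, _, x, hx⟩ := key h1 h2
      exact ⟨k, hk1, x, hx⟩
  · exact key
end

section
/- For every integer n ≥ 2, let A = {a, a^n} and B = {a^{n−1}} be languages over the one-letter alphabet {a}. Then the least k ≥ 1 such that A^k ∩ B^k ≠ ∅ is k = n − 1; that is, A^{n−1} ∩ B^{n−1} ≠ ∅, and A^k ∩ B^k = ∅ for all k with 1 ≤ k < n − 1. -/
private lemma B_pow_len_fwd (m : ℕ) (B : Language (Fin 1))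
    (hB : B = {x | x.length = m}) :
    ∀ k x, x ∈ B ^ k → x.length = k * m := by
  intro k
  induction k with
  | zero => intro x hx; rw [pow_zero] at hx; simp [Language.mem_one] at hx; simp [hx]
  | succ k ih =>
    intro x hx
    rw [pow_succ, Language.mem_mul] at hx
    obtain ⟨a, ha, b, hb, rfl⟩ := hx
    rw [hB] at hb; change b.length = m at hb
    simp only [List.length_append, ih a ha, hb]
    ring

private lemma B_pow_len_bwd (m : ℕ) (B : Language (Fin 1))
    (hB : B = {x | x.length = m}) :
    ∀ k, (List.replicate (k * m) (0 : Fin 1)) ∈ B ^ k := by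
  intro k
  induction k with
  | zero => simp [pow_zero, Language.mem_one]
  | succ k ih =>
    rw [pow_succ]
    have : (k + 1) * m = k * m + m := by ring
    rw [this, List.replicate_add]
    exact Language.append_mem_mul ih (by rw [hB]; exact Set.mem_setOf.mpr (by simp))

private lemma A_pow_len_fwd (n : ℕ) (hn : 2 ≤ n) (A : Language (Fin 1))
    (hA : A = {x | x.length = 1 ∨ x.length = n}) :
    ∀ k x, x ∈ A ^ k → ∃ j ≤ k, x.length = k + j * (n - 1) := by
  intro k
  induction k with
  | zero =>
    intro x hx; rw [pow_zero] at hx; simp [Language.mem_one] at hx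
    exact ⟨0, le_refl 0, by simp [hx]⟩
  | succ k ih =>
    intro x hx
    rw [pow_succ, Language.mem_mul] at hx
    obtain ⟨a, ha, b, hb, rfl⟩ := hx
    obtain ⟨j, hj, hlen⟩ := ih a ha
    rw [hA] at hb; change b.length = 1 ∨ b.length = n at hb
    rcases hb with hb | hb
    · exact ⟨j, by omega, by simp only [List.length_append, hlen, hb]; omega⟩
    · refine ⟨j + 1, by omega, ?_⟩
      simp only [List.length_append, hlen, hb]
      cases n with
      | zero => omega
      | succ n => simp [Nat.succ_sub_one]; ring
  
private lemma A_pow_len_bwd (n : ℕ) (hn : 2 ≤ n) (A : Language (Fin 1))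
    (hA : A = {x | x.length = 1 ∨ x.length = n}) :
    ∀ k j, j ≤ k → (List.replicate (k + j * (n - 1)) (0 : Fin 1)) ∈ A ^ k := by
  intro k
  induction k with
  | zero => intro j hj; interval_cases j; simp [pow_zero, Language.mem_one]
  | succ k ih =>
    intro j hj
    rw [pow_succ]
    rcases Nat.lt_or_ge j (k + 1) with h | h
    · have h' : j ≤ k := by omega
      have : k + 1 + j * (n - 1) = (k + j * (n - 1)) + 1 := by ring
      rw [this, List.replicate_add]
      exact Language.append_mem_mul (ih j h') (by rw [hA]; exact Set.mem_setOf.mpr (by simp))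
    · have hjk : j = k + 1 := by omega
      subst hjk
      have : k + 1 + (k + 1) * (n - 1) = (k + k * (n - 1)) + n := by
        have : 1 ≤ n := by omega
        zify [this]; ring
      rw [this, List.replicate_add]
      exact Language.append_mem_mul (ih k le_rfl) (by rw [hA]; exact Set.mem_setOf.mpr (by simp))

/-- For `n ≥ 2`, with `A = {a, a^n}` and `B = {a^(n−1)}` over the one-letter
alphabet, the least `k ≥ 1` with `A^k ∩ B^k ≠ ∅` is `k = n − 1`. -/
theorem unary_matched_powers_tight (n : ℕ) (hn : 2 ≤ n)
    (A B : Language (Fin 1))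
    (hA : A = {x | x.length = 1 ∨ x.length = n})
    (hB : B = {x | x.length = n - 1}) :
    (∃ x, x ∈ A ^ (n - 1) ∧ x ∈ B ^ (n - 1)) ∧
    (∀ k : ℕ, 1 ≤ k → k < n - 1 → ¬ ∃ x, x ∈ A ^ k ∧ x ∈ B ^ k) := by
  constructor
  · refine ⟨List.replicate ((n - 1) * (n - 1)) 0, ?_, B_pow_len_bwd _ _ hB _⟩
    have h1 : (n - 1) * (n - 1) = (n - 1) + (n - 2) * (n - 1) := by
      have : n - 1 = 1 + (n - 2) := by omega
      rw [this]; ring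
    rw [h1]
    exact A_pow_len_bwd n hn A hA (n - 1) (n - 2) (by omega)
  · rintro k hk1 hk2 ⟨x, hxA, hxB⟩
    obtain ⟨j, hj, hlen⟩ := A_pow_len_fwd n hn A hA k x hxA
    have hlenB := B_pow_len_fwd (n - 1) B hB k x hxB
    rw [hlen] at hlenB
    -- k + j*(n-1) = k*(n-1), so (k-j)*(n-1) = k
    have hm : 1 ≤ n - 1 := by omega
    have hjk : j < k := by
      rcases Nat.lt_or_ge j k with h | h
      · exact h
      · exfalso
        have : j = k := by omega
        subst this
        omega
    have key : (k - j) * (n - 1) = k := by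
      have : k * (n - 1) - j * (n - 1) = k := by omega
      rw [← Nat.sub_mul] at this
      exact this
    have : n - 1 ≤ (k - j) * (n - 1) := Nat.le_mul_of_pos_left _ (by omega)
    omega
end
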